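/- Let a be an irrational real number and b > a, and let f(x) = (x − a)^{−1/2} on (a, b]. Then the full equidistant Riemann sums S_n = (1/n) Σ_{k ∈ ℤ, a·n < k < b·n} (k/n − a)^{−1/2} do NOT converge to the improper integral ∫_{a+}^b (x − a)^{−1/2} dx = 2√(b − a); in fact, limsup_{n→∞} S_n ≥ 2√(b − a) + 1. -/

import Mathlib

open MeasureTheory Filter Set
open scoped Real Topology



open scoped Classical in
noncomputable def sbAux (a : ℝ) : ℕ → (ℤ × ℤ) × (ℤ × ℤ)
  | 0 => ((⌊a⌋, 1), (⌊a⌋ + 1, 1))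
  | (n+1) =>
    let s := sbAux a n
    let p1 := s.1.1; let q1 := s.1.2; let p2 := s.2.1; let q2 := s.2.2
    if ((p1 + p2 : ℤ) : ℝ) < a * ((q1 + q2 : ℤ) : ℝ) then
      ((p1 + p2, q1 + q2), (p2, q2))
    else
      ((p1, q1), (p1 + p2, q1 + q2))

lemma irr_ne (a : ℝ) (ha : Irrational a) (p q : ℤ) (hq : q ≠ 0) : a * q ≠ p := by
  intro h
  have : a = ((p : ℚ) / (q : ℚ) : ℚ) := by
    push_cast
    field_simp
    linarith [h]
  exact (Rat.not_irrational _) (this ▸ ha)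

structure SBInv (a : ℝ) (s : (ℤ × ℤ) × (ℤ × ℤ)) : Prop where
  hq1 : 1 ≤ s.1.2
  hq2 : 1 ≤ s.2.2
  h1 : (s.1.1 : ℝ) < a * s.1.2
  h2 : a * s.2.2 < (s.2.1 : ℝ)
  det : s.2.1 * s.1.2 - s.1.1 * s.2.2 = 1

lemma sbInv (a : ℝ) (ha : Irrational a) : ∀ n, SBInv a (sbAux a n) := by
  intro n
  induction n with
  | zero =>
    rw [show sbAux a 0 = ((⌊a⌋, 1), (⌊a⌋ + 1, 1)) from rfl]
    have hfl : ((⌊a⌋ : ℤ) : ℝ) ≠ a := fun h => ha ⟨⌊a⌋, h⟩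
    refine ⟨le_refl 1, le_refl 1, ?_, ?_, by ring⟩
    · show ((⌊a⌋ : ℤ) : ℝ) < a * ((1 : ℤ) : ℝ)
      simpa using lt_of_le_of_ne (Int.floor_le a) hfl
    · show a * ((1 : ℤ) : ℝ) < ((⌊a⌋ + 1 : ℤ) : ℝ)
      push_cast
      simpa using Int.lt_floor_add_one a
  | succ n ih =>
    obtain ⟨hq1, hq2, h1, h2, det⟩ := ih
    set s := sbAux a n with hs
    show SBInv a (sbAux a (n+1))
    rw [sbAux]
    simp only [← hs]
    by_cases hlt : ((s.1.1 + s.2.1 : ℤ) : ℝ) < a * ((s.1.2 + s.2.2 : ℤ) : ℝ)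
    · rw [if_pos hlt]
      exact ⟨by dsimp; omega, hq2, by push_cast at hlt ⊢; linarith, h2, by dsimp; linear_combination det⟩
    · rw [if_neg hlt]
      have hne : a * ((s.1.2 + s.2.2 : ℤ) : ℝ) ≠ ((s.1.1 + s.2.1 : ℤ) : ℝ) :=
        irr_ne a ha _ _ (by omega)
      have : a * ((s.1.2 + s.2.2 : ℤ) : ℝ) < ((s.1.1 + s.2.1 : ℤ) : ℝ) :=
        lt_of_le_of_ne (not_lt.1 hlt) hne
      exact ⟨hq1, by dsimp; omega, h1, by push_cast at this ⊢; linarith, by dsimp; linear_combination det⟩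

open scoped Classical in
lemma sbAux_succ (a : ℝ) (n : ℕ) :
    sbAux a (n+1) =
      (if (((sbAux a n).1.1 + (sbAux a n).2.1 : ℤ) : ℝ) <
          a * (((sbAux a n).1.2 + (sbAux a n).2.2 : ℤ) : ℝ) then
        (((sbAux a n).1.1 + (sbAux a n).2.1, (sbAux a n).1.2 + (sbAux a n).2.2),
          ((sbAux a n).2.1, (sbAux a n).2.2))
      else
        (((sbAux a n).1.1, (sbAux a n).1.2),
          ((sbAux a n).1.1 + (sbAux a n).2.1, (sbAux a n).1.2 + (sbAux a n).2.2))) := rfl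

def SBLower (a : ℝ) (n : ℕ) : Prop :=
  (((sbAux a n).1.1 + (sbAux a n).2.1 : ℤ) : ℝ) <
    a * (((sbAux a n).1.2 + (sbAux a n).2.2 : ℤ) : ℝ)

lemma sb_step_lower (a : ℝ) (n : ℕ) (h : SBLower a n) :
    sbAux a (n+1) =
      (((sbAux a n).1.1 + (sbAux a n).2.1, (sbAux a n).1.2 + (sbAux a n).2.2),
        ((sbAux a n).2.1, (sbAux a n).2.2)) := by
  unfold SBLower at h
  rw [sbAux_succ, if_pos h]

lemma sb_step_upper (a : ℝ) (n : ℕ) (h : ¬ SBLower a n) :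
    sbAux a (n+1) =
      (((sbAux a n).1.1, (sbAux a n).1.2),
        ((sbAux a n).1.1 + (sbAux a n).2.1, (sbAux a n).1.2 + (sbAux a n).2.2)) := by
  unfold SBLower at h
  rw [sbAux_succ, if_neg h]

noncomputable def sbD1 (a : ℝ) (n : ℕ) : ℝ :=
  a * ((sbAux a n).1.2 : ℝ) - ((sbAux a n).1.1 : ℝ)

noncomputable def sbD2 (a : ℝ) (n : ℕ) : ℝ :=
  ((sbAux a n).2.1 : ℝ) - a * ((sbAux a n).2.2 : ℝ)

lemma sbD1_pos (a : ℝ) (ha : Irrational a) (n : ℕ) : 0 < sbD1 a n := by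
  have := (sbInv a ha n).h1; unfold sbD1; linarith

lemma sbD2_pos (a : ℝ) (ha : Irrational a) (n : ℕ) : 0 < sbD2 a n := by
  have := (sbInv a ha n).h2; unfold sbD2; linarith

lemma sbD_lower (a : ℝ) (n : ℕ) (h : SBLower a n) :
    sbD1 a (n+1) = sbD1 a n - sbD2 a n ∧ sbD2 a (n+1) = sbD2 a n := by
  unfold sbD1 sbD2
  rw [sb_step_lower a n h]
  constructor
  · push_cast; ring
  · rfl

lemma sbD_upper (a : ℝ) (n : ℕ) (h : ¬ SBLower a n) :
    sbD1 a (n+1) = sbD1 a n ∧ sbD2 a (n+1) = sbD2 a n - sbD1 a n := by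
  unfold sbD1 sbD2
  rw [sb_step_upper a n h]
  constructor
  · rfl
  · push_cast; ring

/-- There are infinitely many lower steps. -/
lemma sb_lower_inf (a : ℝ) (ha : Irrational a) (t : ℕ) : ∃ m, t ≤ m ∧ SBLower a m := by
  by_contra hcon
  push_neg at hcon
  have hstep : ∀ k : ℕ, sbD1 a (t + k) = sbD1 a t ∧ sbD2 a (t + k) = sbD2 a t - k * sbD1 a t := by
    intro k
    induction k with
    | zero => simp
    | succ k ih =>
      have h := sbD_upper a (t + k) (hcon _ (Nat.le_add_right _ _))
      rw [show t + (k+1) = (t+k) + 1 from rfl]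
      refine ⟨by rw [h.1, ih.1], ?_⟩
      rw [h.2, ih.1, ih.2]
      push_cast; ring
  obtain ⟨k, hk⟩ := exists_nat_gt (sbD2 a t / sbD1 a t)
  have h1 := sbD1_pos a ha t
  have h2 := sbD2_pos a ha (t + k)
  rw [(hstep k).2] at h2
  rw [div_lt_iff₀ h1] at hk
  linarith

/-- There are infinitely many upper steps. -/
lemma sb_upper_inf (a : ℝ) (ha : Irrational a) (t : ℕ) : ∃ m, t ≤ m ∧ ¬ SBLower a m := by
  by_contra hcon
  push_neg at hcon
  have hstep : ∀ k : ℕ, sbD2 a (t + k) = sbD2 a t ∧ sbD1 a (t + k) = sbD1 a t - k * sbD2 a t := by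
    intro k
    induction k with
    | zero => simp
    | succ k ih =>
      have h := sbD_lower a (t + k) (hcon _ (Nat.le_add_right _ _))
      rw [show t + (k+1) = (t+k) + 1 from rfl]
      refine ⟨by rw [h.2, ih.1], ?_⟩
      rw [h.1, ih.1, ih.2]
      push_cast; ring
  obtain ⟨k, hk⟩ := exists_nat_gt (sbD1 a t / sbD2 a t)
  have h1 := sbD2_pos a ha t
  have h2 := sbD1_pos a ha (t + k)
  rw [(hstep k).2] at h2
  rw [div_lt_iff₀ h1] at hk
  linarith

lemma sbQ2_mono (a : ℝ) (ha : Irrational a) : Monotone (fun n => (sbAux a n).2.2) := by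
  apply monotone_nat_of_le_succ
  intro n
  have hq1 := (sbInv a ha n).hq1
  by_cases h : SBLower a n
  · rw [sb_step_lower a n h]
  · rw [sb_step_upper a n h]; dsimp; omega

lemma sbQ2_unbounded (a : ℝ) (ha : Irrational a) (M : ℕ) :
    ∃ t, (M : ℤ) ≤ (sbAux a t).2.2 := by
  induction M with
  | zero => exact ⟨0, by norm_num [show (sbAux a 0).2.2 = 1 from rfl]⟩
  | succ M ih =>
    obtain ⟨t, ht⟩ := ih
    obtain ⟨m, htm, hm⟩ := sb_upper_inf a ha t
    refine ⟨m + 1, ?_⟩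
    have hmono := sbQ2_mono a ha htm
    have hq1 := (sbInv a ha m).hq1
    rw [sb_step_upper a m hm]
    dsimp at hmono ⊢
    push_cast
    omega

/-- One-sided Dirichlet: infinitely many q with 0 < p - qa and q(p - qa) < 1. -/
lemma exists_good_q (a : ℝ) (ha : Irrational a) (N : ℕ) :
    ∃ q : ℕ, N ≤ q ∧ ∃ p : ℤ, 0 < (p : ℝ) - a * q ∧ (q : ℝ) * ((p : ℝ) - a * q) < 1 := by
  obtain ⟨t, ht⟩ := sbQ2_unbounded a ha N
  obtain ⟨m, htm, hm⟩ := sb_lower_inf a ha t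
  -- after the lower step at time m, q1 > q2 and q2 ≥ N
  obtain ⟨hq1, hq2, h1, h2, det⟩ := sbInv a ha (m + 1)
  have hstep := sb_step_lower a m hm
  have hq1m := (sbInv a ha m).hq1
  have hq2m := (sbInv a ha m).hq2
  have hQlt : (sbAux a (m+1)).2.2 < (sbAux a (m+1)).1.2 := by
    rw [hstep]; dsimp; omega
  have hQN : (N : ℤ) ≤ (sbAux a (m+1)).2.2 := by
    have hmono := sbQ2_mono a ha (Nat.le_succ_of_le htm)
    dsimp at hmono
    omega
  have hQ2nn : (0 : ℤ) ≤ (sbAux a (m+1)).2.2 := by omega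
  have hQN' : (N : ℤ) ≤ (sbAux a (m+1)).2.2 := hQN
  refine ⟨(sbAux a (m+1)).2.2.toNat, by omega, (sbAux a (m+1)).2.1, ?_, ?_⟩
  all_goals {
    have hQ2cast : (((sbAux a (m+1)).2.2.toNat : ℕ) : ℝ) = ((sbAux a (m+1)).2.2 : ℝ) := by
      exact_mod_cast congrArg (Int.cast : ℤ → ℝ) (Int.toNat_of_nonneg hQ2nn)
    rw [hQ2cast]
    have hQ1R : (1 : ℝ) ≤ ((sbAux a (m+1)).1.2 : ℝ) := by exact_mod_cast hq1
    have hQ2R : (1 : ℝ) ≤ ((sbAux a (m+1)).2.2 : ℝ) := by exact_mod_cast hq2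
    have hQltR : ((sbAux a (m+1)).2.2 : ℝ) < ((sbAux a (m+1)).1.2 : ℝ) := by exact_mod_cast hQlt
    have hdetR : ((sbAux a (m+1)).2.1 : ℝ) * ((sbAux a (m+1)).1.2 : ℝ) -
        ((sbAux a (m+1)).1.1 : ℝ) * ((sbAux a (m+1)).2.2 : ℝ) = 1 := by exact_mod_cast det
    first
    | linarith [h2]
    | nlinarith [h1, h2, mul_pos (sub_pos.mpr h1)
        (mul_pos (by linarith : (0:ℝ) < ((sbAux a (m+1)).2.2 : ℝ))
          (by linarith : (0:ℝ) < ((sbAux a (m+1)).2.2 : ℝ)))]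
  }


lemma sqrt_step {x c : ℝ} (hx : 0 < x) (hc : 0 < c) :
    2 * (Real.sqrt (x + c) - Real.sqrt x) ≤ (Real.sqrt x)⁻¹ * c := by
  have hsx : 0 < Real.sqrt x := Real.sqrt_pos.mpr hx
  have hxx : Real.sqrt x * Real.sqrt x = x := Real.mul_self_sqrt hx.le
  have hyy : Real.sqrt (x + c) * Real.sqrt (x + c) = x + c :=
    Real.mul_self_sqrt (by linarith)
  have hprod : Real.sqrt x * Real.sqrt (x + c) ≤ x + c / 2 := by
    nlinarith [sq_nonneg (Real.sqrt x - Real.sqrt (x + c))]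
  rw [inv_mul_eq_div, le_div_iff₀ hsx]
  nlinarith [hprod]

lemma Icc_split_bot (p K : ℤ) (h : p ≤ K) :
    Finset.Icc p K = insert p (Finset.Icc (p+1) K) := by
  ext k; simp only [Finset.mem_Icc, Finset.mem_insert]; omega

lemma Icc_split_top (c K : ℤ) (h : c ≤ K + 1) :
    Finset.Icc c (K+1) = insert (K+1) (Finset.Icc c K) := by
  ext k; simp only [Finset.mem_Icc, Finset.mem_insert]; omega

lemma telescope (a : ℝ) (q : ℕ) (hq : 1 ≤ q) (p : ℤ) (hp : a * q < p) (K : ℤ) (hK : p ≤ K) :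
    2 * (Real.sqrt (((K : ℝ) + 1)/q - a) - Real.sqrt (((p : ℝ) + 1)/q - a)) ≤
      ∑ k ∈ Finset.Icc (p+1) K, (Real.sqrt ((k : ℝ)/q - a))⁻¹ * (1/q) := by
  have hqpos : (0 : ℝ) < q := by exact_mod_cast hq
  refine Int.le_induction (motive := fun K _ =>
    2 * (Real.sqrt (((K : ℝ) + 1)/q - a) - Real.sqrt (((p : ℝ) + 1)/q - a)) ≤
      ∑ k ∈ Finset.Icc (p+1) K, (Real.sqrt ((k : ℝ)/q - a))⁻¹ * (1/q)) ?_ ?_ K hK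
  · rw [Finset.Icc_eq_empty (by omega)]
    simp
  · intro K hK ih
    rw [Icc_split_top (p+1) K (by omega), Finset.sum_insert (by simp [Finset.mem_Icc])]
    have hx : (0 : ℝ) < ((K : ℝ) + 1)/q - a := by
      have hpK : (p : ℝ) ≤ (K : ℝ) := by exact_mod_cast hK
      rw [sub_pos, lt_div_iff₀ hqpos]
      linarith
    have hkey := sqrt_step hx (by positivity : (0:ℝ) < 1/(q:ℝ))
    have heq : ((K : ℝ) + 1)/q - a + 1/q = (((K+1 : ℤ) : ℝ) + 1)/q - a := by
      push_cast; field_simp; ring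
    rw [heq] at hkey
    have hcast : ((K + 1 : ℤ) : ℝ)/q - a = ((K : ℝ) + 1)/q - a := by push_cast; ring
    rw [hcast]
    linarith

noncomputable def rSum (a b : ℝ) (n : ℕ) : ℝ :=
  (1 / (n : ℝ)) * ∑ k ∈ (Finset.Icc ⌈a * n⌉ ⌊b * n⌋).filter
      (fun k : ℤ => a * n < (k : ℝ) ∧ (k : ℝ) < b * n),
    (Real.sqrt ((k : ℝ) / n - a))⁻¹

lemma rSum_lower (a b : ℝ) (hab : a < b) (q : ℕ) (hq1 : 1 ≤ q) (hq3 : 3 ≤ (b - a) * q)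
    (p : ℤ) (hp0 : 0 < (p : ℝ) - a * q) (hp1 : (q : ℝ) * ((p : ℝ) - a * q) < 1) :
    2 * Real.sqrt (b - a) + 1 - 2 * Real.sqrt 2 / Real.sqrt q ≤ rSum a b q := by
  have hqpos : (0 : ℝ) < q := by exact_mod_cast hq1
  have hqR : (1 : ℝ) ≤ q := by exact_mod_cast hq1
  set θ : ℝ := (p : ℝ) - a * q with hθ
  have hθ1 : θ < 1 := by nlinarith
  have hbq : a * q + 3 ≤ b * q := by nlinarith
  set K : ℤ := ⌈b * (q : ℝ)⌉ - 1 with hKdef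
  have hKlt : (K : ℝ) < b * q := by
    have := Int.ceil_lt_add_one (b * (q : ℝ))
    push_cast [hKdef]
    linarith
  have hKge : b * q - 1 ≤ (K : ℝ) := by
    have := Int.le_ceil (b * (q : ℝ))
    push_cast [hKdef]
    linarith
  have hpK : p + 1 ≤ K := by
    have h1 : ((p + 1 : ℤ) : ℝ) < (K : ℝ) := by push_cast; linarith
    have : p + 1 < K := by exact_mod_cast h1
    omega
  have hceil : ⌈a * (q : ℝ)⌉ ≤ p := Int.ceil_le.mpr (by linarith)
  have hfloor : p ≤ ⌊b * (q : ℝ)⌋ := Int.le_floor.mpr (by linarith)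
  have hsub : Finset.Icc p K ⊆
      (Finset.Icc ⌈a * (q : ℝ)⌉ ⌊b * (q : ℝ)⌋).filter
        (fun k : ℤ => a * q < (k : ℝ) ∧ (k : ℝ) < b * q) := by
    intro k hk
    rw [Finset.mem_Icc] at hk
    have hkK : (k : ℝ) ≤ (K : ℝ) := by exact_mod_cast hk.2
    have hpk : (p : ℝ) ≤ (k : ℝ) := by exact_mod_cast hk.1
    rw [Finset.mem_filter, Finset.mem_Icc]
    exact ⟨⟨hceil.trans hk.1, Int.le_floor.mpr (by linarith)⟩, by linarith, by linarith⟩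
  have hmono : (1 / (q : ℝ)) * ∑ k ∈ Finset.Icc p K, (Real.sqrt ((k : ℝ) / q - a))⁻¹ ≤
      rSum a b q := by
    unfold rSum
    apply mul_le_mul_of_nonneg_left _ (by positivity)
    exact Finset.sum_le_sum_of_subset_of_nonneg hsub (fun i _ _ => by positivity)
  rw [Icc_split_bot p K (by omega), Finset.sum_insert (by simp [Finset.mem_Icc])] at hmono
  rw [mul_add] at hmono
  -- first term bound
  have hfirst : 1 ≤ (1 / (q : ℝ)) * (Real.sqrt ((p : ℝ) / q - a))⁻¹ := by
    have e1 : (p : ℝ) / q - a = θ / q := by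
      rw [hθ]
      field_simp
    rw [e1, Real.sqrt_div hp0.le]
    have hsqq : 0 < Real.sqrt q := Real.sqrt_pos.mpr hqpos
    have hsqθ : 0 < Real.sqrt θ := Real.sqrt_pos.mpr hp0
    have hsq : Real.sqrt q * Real.sqrt q = (q : ℝ) := Real.mul_self_sqrt hqpos.le
    have heq : (1 : ℝ) / q * (Real.sqrt θ / Real.sqrt q)⁻¹ =
        (Real.sqrt q * Real.sqrt θ)⁻¹ := by
      rw [inv_div]
      field_simp
      linear_combination hsq
    rw [heq]
    refine one_le_inv_iff₀.mpr ⟨by positivity, ?_⟩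
    rw [← Real.sqrt_mul hqpos.le]
    exact Real.sqrt_le_one.mpr hp1.le
  -- telescoping bound
  have htel := telescope a q hq1 p (by linarith) K (by omega)
  rw [← Finset.sum_mul] at htel
  have htel' : 2 * (Real.sqrt (b - a) - Real.sqrt 2 / Real.sqrt q) ≤
      (1 / (q : ℝ)) * ∑ k ∈ Finset.Icc (p+1) K, (Real.sqrt ((k : ℝ) / q - a))⁻¹ := by
    have h1 : Real.sqrt (b - a) ≤ Real.sqrt (((K : ℝ) + 1) / q - a) := by
      apply Real.sqrt_le_sqrt
      rw [le_sub_iff_add_le, le_div_iff₀ hqpos]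
      nlinarith
    have h2 : Real.sqrt (((p : ℝ) + 1) / q - a) ≤ Real.sqrt 2 / Real.sqrt q := by
      rw [← Real.sqrt_div (by norm_num : (0:ℝ) ≤ 2)]
      apply Real.sqrt_le_sqrt
      rw [div_sub' (ne_of_gt hqpos), div_le_div_iff₀ hqpos hqpos]
      nlinarith
    calc 2 * (Real.sqrt (b - a) - Real.sqrt 2 / Real.sqrt q)
        ≤ 2 * (Real.sqrt (((K : ℝ) + 1) / q - a) - Real.sqrt (((p : ℝ) + 1) / q - a)) := by
          linarith
      _ ≤ (∑ k ∈ Finset.Icc (p+1) K, (Real.sqrt ((k : ℝ) / q - a))⁻¹) * (1 / q) := htel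
      _ = (1 / (q : ℝ)) * ∑ k ∈ Finset.Icc (p+1) K, (Real.sqrt ((k : ℝ) / q - a))⁻¹ := by
          ring
  have : 2 * Real.sqrt (b - a) + 1 - 2 * Real.sqrt 2 / Real.sqrt q =
      1 + 2 * (Real.sqrt (b - a) - Real.sqrt 2 / Real.sqrt q) := by ring
  linarith


lemma ereal_limsup_ge (a b : ℝ) (ha : Irrational a) (hab : a < b) :
    ((2 * Real.sqrt (b - a) + 1 : ℝ) : EReal) ≤
      Filter.limsup (fun n : ℕ => ((rSum a b n : ℝ) : EReal)) atTop := by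
  have hba : (0 : ℝ) < b - a := by linarith
  set L : ℝ := 2 * Real.sqrt (b - a) with hL
  have key : ∀ ε : ℝ, 0 < ε →
      ((L + 1 - ε : ℝ) : EReal) ≤
        Filter.limsup (fun n : ℕ => ((rSum a b n : ℝ) : EReal)) atTop := by
    intro ε hε
    apply le_limsup_of_frequently_le'
    rw [frequently_atTop]
    intro N
    obtain ⟨q, hqN, p, hp0, hp1⟩ :=
      exists_good_q a ha (max N (max (⌈3/(b-a)⌉₊ + 1) (⌈8/ε^2⌉₊ + 1)))
    have hqN1 : N ≤ q := le_trans (le_max_left _ _) hqN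
    have hq3' : ⌈3/(b-a)⌉₊ + 1 ≤ q :=
      le_trans (le_trans (le_max_left _ _) (le_max_right _ _)) hqN
    have hq8' : ⌈8/ε^2⌉₊ + 1 ≤ q :=
      le_trans (le_trans (le_max_right _ _) (le_max_right _ _)) hqN
    have hq1 : 1 ≤ q := by omega
    have hqpos : (0 : ℝ) < q := by exact_mod_cast hq1
    have hq3 : 3 ≤ (b - a) * q := by
      have h1 : 3/(b-a) ≤ (q : ℝ) := by
        calc 3/(b-a) ≤ (⌈3/(b-a)⌉₊ : ℝ) := Nat.le_ceil _
          _ ≤ (q : ℝ) := by exact_mod_cast le_trans (Nat.le_succ _) hq3'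
      rw [div_le_iff₀ hba] at h1
      nlinarith
    have h8 : 8 ≤ ε^2 * q := by
      have h1 : 8/ε^2 ≤ (q : ℝ) := by
        calc 8/ε^2 ≤ (⌈8/ε^2⌉₊ : ℝ) := Nat.le_ceil _
          _ ≤ (q : ℝ) := by exact_mod_cast le_trans (Nat.le_succ _) hq8'
      rw [div_le_iff₀ (by positivity)] at h1
      nlinarith
    have hεq : 2 * Real.sqrt 2 / Real.sqrt q ≤ ε := by
      have hsq8 : 2 * Real.sqrt 2 = Real.sqrt 8 := by
        rw [show (8:ℝ) = 2^2*2 by norm_num, Real.sqrt_mul (by positivity),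
          Real.sqrt_sq (by norm_num)]
      calc 2 * Real.sqrt 2 / Real.sqrt q = Real.sqrt 8 / Real.sqrt q := by rw [hsq8]
        _ = Real.sqrt (8 / q) := (Real.sqrt_div (by norm_num) q).symm
        _ ≤ Real.sqrt (ε^2) := Real.sqrt_le_sqrt (by rw [div_le_iff₀ hqpos]; nlinarith)
        _ = ε := Real.sqrt_sq hε.le
    refine ⟨q, hqN1, ?_⟩
    rw [EReal.coe_le_coe_iff]
    have hmain := rSum_lower a b hab q hq1 hq3 p hp0 hp1
    linarith
  have lim : ∀ k : ℕ, ((L + 1 - 1/((k:ℝ)+1) : ℝ) : EReal) ≤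
      Filter.limsup (fun n : ℕ => ((rSum a b n : ℝ) : EReal)) atTop :=
    fun k => key _ (by positivity)
  have ht : Tendsto (fun k : ℕ => ((L + 1 - 1/((k:ℝ)+1) : ℝ) : EReal)) atTop
      (𝓝 ((L + 1 : ℝ) : EReal)) := by
    rw [EReal.tendsto_coe]
    have h0 : Tendsto (fun k : ℕ => 1/((k:ℝ)+1)) atTop (𝓝 0) :=
      tendsto_one_div_add_atTop_nhds_zero_nat
    simpa using tendsto_const_nhds.sub h0
  exact le_of_tendsto ht (Eventually.of_forall lim)

/-- Remark after Lemma 2: for `a` irrational and `f(x) = (x-a)^{-1/2}`, the full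
equidistant Riemann sums `S_n = (1/n) ∑_{an < k < bn} (k/n - a)^{-1/2}` do not converge
to the improper integral `2√(b-a)`; in fact `limsup S_n ≥ 2√(b-a) + 1`. -/
theorem full_riemann_sums_fail
    (a b : ℝ) (ha : Irrational a) (hab : a < b) :
    (¬ Tendsto
        (fun n : ℕ => (1 / (n : ℝ)) *
          ∑ k ∈ (Finset.Icc ⌈a * n⌉ ⌊b * n⌋).filter
              (fun k : ℤ => a * n < (k : ℝ) ∧ (k : ℝ) < b * n),
            (Real.sqrt ((k : ℝ) / n - a))⁻¹)
        atTop (nhds (2 * Real.sqrt (b - a)))) ∧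
      ((2 * Real.sqrt (b - a) + 1 : ℝ) : EReal) ≤
        Filter.limsup
          (fun n : ℕ => (((1 / (n : ℝ)) *
            ∑ k ∈ (Finset.Icc ⌈a * n⌉ ⌊b * n⌋).filter
                (fun k : ℤ => a * n < (k : ℝ) ∧ (k : ℝ) < b * n),
              (Real.sqrt ((k : ℝ) / n - a))⁻¹ : ℝ) : EReal))
          atTop := by
  have h2 : ((2 * Real.sqrt (b - a) + 1 : ℝ) : EReal) ≤
      Filter.limsup (fun n : ℕ => ((rSum a b n : ℝ) : EReal)) atTop :=
    ereal_limsup_ge a b ha hab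
  constructor
  · intro hT
    have hT' : Tendsto (fun n : ℕ => ((rSum a b n : ℝ) : EReal)) atTop
        (𝓝 ((2 * Real.sqrt (b - a) : ℝ) : EReal)) := EReal.tendsto_coe.mpr hT
    rw [hT'.limsup_eq] at h2
    have := EReal.coe_le_coe_iff.mp h2
    linarith
  · exact h2
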